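/- For the WT policy decomposition (a_n = 1/ρ_n, b_n = 0), the delivery ratios q_n = τ p_n θ_k ρ_n for n ∈ H_k∖H_{k−1}, together with multipliers μ_n = 0, ζ_{H_K} = 1/(τθ_K), ζ_{H_k} = 1/(τθ_k) − 1/(τθ_{k+1}) for 1 ≤ k ≤ K−1, and ζ_S = 0 for all other S, satisfy the KKT conditions of ACCESS-POINT; hence q maximizes Σ ρ_i log q_i over the feasible region. -/

import Mathlib

open Finset

/-- Theorem 5: the limiting delivery ratios of the WT policy solve ACCESS-POINT.
For the WT decomposition (`a n = 1/ρ n`, `b n = 0`) with layers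
`∅ = H 0 ⊂ H 1 ⊂ … ⊂ H K = {1,…,N}` and values `0 < θ 1 < … < θ K`, the delivery
ratios `q n = τ p n θ k ρ n` for `n ∈ H k \ H (k-1)`, together with the multipliers
`μ n = 0`, `ζ (H K) = 1/(τ θ K)`, `ζ (H k) = 1/(τ θ k) - 1/(τ θ (k+1))` for
`1 ≤ k ≤ K-1` and `ζ S = 0` otherwise, satisfy the KKT conditions of ACCESS-POINT;
hence `q` maximizes `∑ ρ_i log q_i` over the feasible region. -/
theorem stmt_12 (N : ℕ) (τ : ℝ) (hτ : 0 < τ) (p ρ : Fin N → ℝ)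
    (hp : ∀ n, 0 < p n ∧ p n ≤ 1) (hρ : ∀ n, 0 < ρ n)
    (I : Finset (Fin N) → ℝ)
    (K : ℕ) (hK : 1 ≤ K) (H : ℕ → Finset (Fin N)) (θ : ℕ → ℝ)
    (hH0 : H 0 = ∅) (hHK : H K = Finset.univ)
    (hchain : ∀ k, 1 ≤ k → k ≤ K → H (k-1) ⊂ H k)
    (hθ1 : 0 < θ 1)
    (hθmono : ∀ k j, 1 ≤ k → k < j → j ≤ K → θ k < θ j)
    (q : Fin N → ℝ)
    (hq : ∀ k, 1 ≤ k → k ≤ K → ∀ n ∈ H k \ H (k-1), q n = τ * p n * θ k * ρ n)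
    (hlayer : ∀ k, 1 ≤ k → k ≤ K → ∑ n ∈ H k, q n / p n = τ - I (H k))
    (hfeas : ∀ S : Finset (Fin N), ∑ i ∈ S, q i / p i ≤ τ - I S) :
    ∃ (ζ : Finset (Fin N) → ℝ) (μ : Fin N → ℝ),
      (∀ n, μ n = 0) ∧
      ζ (H K) = 1 / (τ * θ K) ∧
      (∀ k, 1 ≤ k → k ≤ K - 1 → ζ (H k) = 1 / (τ * θ k) - 1 / (τ * θ (k+1))) ∧
      (∀ S : Finset (Fin N), (∀ k, 1 ≤ k → k ≤ K → S ≠ H k) → ζ S = 0) ∧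
      -- KKT conditions of ACCESS-POINT
      (∀ S, 0 ≤ ζ S) ∧ (∀ n, 0 ≤ μ n) ∧
      (∀ n, -ρ n / q n + (∑ S : Finset (Fin N), if n ∈ S then ζ S else 0) / p n
        - μ n = 0) ∧
      (∀ S : Finset (Fin N), ζ S * ((∑ i ∈ S, q i / p i) - (τ - I S)) = 0) ∧
      (∀ n, μ n * q n = 0) ∧
      -- hence q solves ACCESS-POINT
      (∀ q' : Fin N → ℝ, (∀ n, 0 < q' n) →
        (∀ S : Finset (Fin N), ∑ i ∈ S, q' i / p i ≤ τ - I S) →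
        ∑ i, ρ i * Real.log (q' i) ≤ ∑ i, ρ i * Real.log (q i)) := by
  classical
  have hθpos : ∀ k, 1 ≤ k → k ≤ K → 0 < θ k := by
    intro k h1 h2
    rcases eq_or_lt_of_le h1 with h | h
    · simpa [← h] using hθ1
    · exact hθ1.trans (hθmono 1 k le_rfl h h2)
  have hmono : ∀ k, k ≤ K → ∀ j, j ≤ k → H j ⊆ H k := by
    intro k
    induction k with
    | zero => intro _ j hj; have : j = 0 := by omega
              simp [this]
    | succ m ih =>
      intro hK' j hj
      rcases Nat.lt_succ_iff_lt_or_eq.mp (Nat.lt_succ_of_le hj) with h | h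
      · have h1 : H j ⊆ H m := ih (by omega) j (by omega)
        have h2 : H m ⊂ H (m+1) := by simpa using hchain (m+1) (by omega) hK'
        exact h1.trans h2.subset
      · simp [h]
  have hssub : ∀ j k, j < k → k ≤ K → H j ⊂ H k := by
    intro j k hjk hkK
    have h1 : H j ⊆ H (k-1) := hmono (k-1) (by omega) j (by omega)
    have h2 : H (k-1) ⊂ H k := hchain k (by omega) hkK
    exact lt_of_le_of_lt h1 h2
  have hinj : ∀ j k, j ≤ K → k ≤ K → H j = H k → j = k := by
    intro j k hj hk he
    by_contra hne
    rcases Nat.lt_or_ge j k with h | h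
    · exact (hssub j k h hk).ne he
    · exact (hssub k j (by omega) hj).ne he.symm
  -- the layer of each n
  have hlayer_ex : ∀ n : Fin N, ∃ k, (1 ≤ k ∧ k ≤ K) ∧ n ∈ H k ∧ n ∉ H (k-1) ∧
      ∀ j, n ∈ H j → k ≤ j := by
    intro n
    have hex : ∃ j, n ∈ H j := ⟨K, by simp [hHK]⟩
    refine ⟨Nat.find hex, ⟨?_, Nat.find_min' hex (by simp [hHK])⟩,
      Nat.find_spec hex, ?_, fun j hm => Nat.find_min' hex hm⟩
    · by_contra h
      have h0 : Nat.find hex = 0 := by omega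
      have := Nat.find_spec hex
      rw [h0, hH0] at this
      simp at this
    · intro hc
      exact Nat.find_min hex (by
        have : 1 ≤ Nat.find hex := by
          by_contra h
          have h0 : Nat.find hex = 0 := by omega
          have := Nat.find_spec hex
          rw [h0, hH0] at this
          simp at this
        omega) hc
  choose kk hkk1 hkkmem hkknot hkkmin using hlayer_ex
  have hqn : ∀ n, q n = τ * p n * θ (kk n) * ρ n := fun n =>
    hq (kk n) (hkk1 n).1 (hkk1 n).2 n (mem_sdiff.mpr ⟨hkkmem n, hkknot n⟩)
  have hqpos : ∀ n, 0 < q n := by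
    intro n
    rw [hqn n]
    have := hθpos (kk n) (hkk1 n).1 (hkk1 n).2
    have := (hp n).1
    have := hρ n
    positivity
  -- multipliers
  set f : ℕ → ℝ := fun k => if k ≤ K then 1 / (τ * θ k) else 0 with hf
  set w : ℕ → ℝ := fun k => f k - f (k+1) with hw
  set ζ : Finset (Fin N) → ℝ :=
    fun S => ∑ k ∈ Finset.Icc 1 K, if S = H k then w k else 0 with hζ
  clear_value f w ζ
  have hζval : ∀ S, ζ S = ∑ k ∈ Finset.Icc 1 K, if S = H k then w k else 0 := by
    intro S; rw [hζ]
  have hwval : ∀ k, w k = f k - f (k+1) := by intro k; rw [hw]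
  have hfval : ∀ k, k ≤ K → f k = 1 / (τ * θ k) := by
    intro k h; rw [hf]; exact if_pos h
  have hfzero : ∀ k, K < k → f k = 0 := by
    intro k h; rw [hf]; exact if_neg (by omega)
  have hwnn : ∀ k, 1 ≤ k → k ≤ K → 0 ≤ w k := by
    intro k h1 h2
    have hθk := hθpos k h1 h2
    rw [hwval k, hfval k h2]
    rcases Nat.lt_or_ge K (k+1) with h | h
    · rw [hfzero (k+1) h, sub_zero]
      positivity
    · have hθk1 := hθpos (k+1) (by omega) h
      have hlt : θ k < θ (k+1) := hθmono k (k+1) h1 (by omega) h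
      rw [hfval (k+1) h]
      have : 1 / (τ * θ (k+1)) ≤ 1 / (τ * θ k) := by
        apply one_div_le_one_div_of_le
        · positivity
        · nlinarith
      linarith
  have hζHk : ∀ k, 1 ≤ k → k ≤ K → ζ (H k) = w k := by
    intro k h1 h2
    rw [hζval]
    rw [Finset.sum_eq_single_of_mem k (Finset.mem_Icc.mpr ⟨h1, h2⟩)]
    · simp
    · intro j hj hne
      rw [if_neg]
      intro he
      exact hne (hinj j k (Finset.mem_Icc.mp hj).2 h2 he.symm)
  -- telescoping
  have htel : ∀ k, 1 ≤ k → k ≤ K → ∑ j ∈ Finset.Icc k K, w j = 1 / (τ * θ k) := by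
    intro k h1 h2
    have : Finset.Icc k K = Finset.Ico k (K+1) := by rw [Finset.Ico_add_one_right_eq_Icc]
    rw [this, Finset.sum_Ico_eq_sum_range]
    have := Finset.sum_range_sub' (fun i => f (k + i)) (K + 1 - k)
    simp only [add_zero] at this
    have heq : ∀ i, w (k + i) = f (k + i) - f (k + (i+1)) := by
      intro i; exact hwval (k + i)
    rw [Finset.sum_congr rfl (fun i _ => heq i), this]
    have h3 : k + (K + 1 - k) = K + 1 := by omega
    rw [h3, hfval k h2, hfzero (K+1) (by omega), sub_zero]
  -- the inner multiplier sum
  have hsumS : ∀ n : Fin N,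
      (∑ S : Finset (Fin N), if n ∈ S then ζ S else 0) = 1 / (τ * θ (kk n)) := by
    intro n
    have step1 : ∀ S : Finset (Fin N), (if n ∈ S then ζ S else 0)
        = ∑ k ∈ Finset.Icc 1 K, if S = H k then (if n ∈ S then w k else 0) else 0 := by
      intro S
      by_cases h : n ∈ S <;> simp [hζval S, h]
    rw [Finset.sum_congr rfl (fun S _ => step1 S), Finset.sum_comm]
    have step2 : ∀ k ∈ Finset.Icc 1 K,
        (∑ S : Finset (Fin N), if S = H k then (if n ∈ S then w k else 0) else 0)
        = if n ∈ H k then w k else 0 := by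
      intro k _
      rw [Finset.sum_ite_eq' Finset.univ (H k) (fun S => if n ∈ S then w k else 0)]
      simp
    rw [Finset.sum_congr rfl step2]
    rw [← Finset.sum_filter]
    have hfil : Finset.filter (fun k => n ∈ H k) (Finset.Icc 1 K)
        = Finset.Icc (kk n) K := by
      ext j
      simp only [Finset.mem_filter, Finset.mem_Icc]
      constructor
      · rintro ⟨⟨hj1, hj2⟩, hjm⟩
        exact ⟨hkkmin n j hjm, hj2⟩
      · rintro ⟨hj1, hj2⟩
        exact ⟨⟨le_trans (hkk1 n).1 hj1, hj2⟩,
          hmono j hj2 (kk n) hj1 (hkkmem n)⟩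
    rw [hfil]
    exact htel (kk n) (hkk1 n).1 (hkk1 n).2
  refine ⟨ζ, fun _ => 0, fun _ => rfl, ?_, ?_, ?_, ?_, fun _ => le_rfl, ?_, ?_, ?_, ?_⟩
  · -- ζ (H K) = 1/(τ θ K)
    rw [hζHk K hK le_rfl, hwval, hfval K le_rfl, hfzero (K+1) (by omega), sub_zero]
  · -- middle layers
    intro k h1 h2
    rw [hζHk k h1 (by omega), hwval, hfval k (by omega), hfval (k+1) (by omega)]
  · -- other sets
    intro S hS
    rw [hζval]
    apply Finset.sum_eq_zero
    intro k hk
    rw [if_neg (hS k (Finset.mem_Icc.mp hk).1 (Finset.mem_Icc.mp hk).2)]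
  · -- nonnegativity of ζ
    intro S
    rw [hζval]
    apply Finset.sum_nonneg
    intro k hk
    split
    · exact hwnn k (Finset.mem_Icc.mp hk).1 (Finset.mem_Icc.mp hk).2
    · exact le_rfl
  · -- stationarity
    intro n
    rw [hsumS n, hqn n]
    have h1 := hθpos (kk n) (hkk1 n).1 (hkk1 n).2
    have h2 := (hp n).1
    have h3 := hρ n
    field_simp
    ring
  · -- complementary slackness
    intro S
    by_cases h : ∀ k, 1 ≤ k → k ≤ K → S ≠ H k
    · have : ζ S = 0 := by
        rw [hζ]; apply Finset.sum_eq_zero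
        intro k hk
        rw [if_neg (h k (Finset.mem_Icc.mp hk).1 (Finset.mem_Icc.mp hk).2)]
      rw [this, zero_mul]
    · push_neg at h
      obtain ⟨k, h1, h2, h3⟩ := h
      rw [h3, hlayer k h1 h2]
      simp
  · intro n; simp
  · -- optimality
    intro q' hq'pos hfeas'
    have hstat : ∀ n, ρ n / q n = (1 / (τ * θ (kk n))) / p n := by
      intro n
      rw [hqn n]
      have h1 := hθpos (kk n) (hkk1 n).1 (hkk1 n).2
      have h2 := (hp n).1
      have h3 := hρ n
      field_simp
    have key : ∀ n, ρ n * Real.log (q' n) - ρ n * Real.log (q n)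
        ≤ ρ n / q n * (q' n - q n) := by
      intro n
      have hlog : Real.log (q' n) - Real.log (q n) = Real.log (q' n / q n) :=
        (Real.log_div (ne_of_gt (hq'pos n)) (ne_of_gt (hqpos n))).symm
      have h2 : Real.log (q' n / q n) ≤ q' n / q n - 1 :=
        Real.log_le_sub_one_of_pos (div_pos (hq'pos n) (hqpos n))
      have h3 : ρ n * (q' n / q n - 1) = ρ n / q n * (q' n - q n) := by
        have hqne := (hqpos n).ne'
        field_simp
      calc ρ n * Real.log (q' n) - ρ n * Real.log (q n)
          = ρ n * (Real.log (q' n) - Real.log (q n)) := by ring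
        _ = ρ n * Real.log (q' n / q n) := by rw [hlog]
        _ ≤ ρ n * (q' n / q n - 1) := by
            exact mul_le_mul_of_nonneg_left h2 (le_of_lt (hρ n))
        _ = ρ n / q n * (q' n - q n) := h3
    -- rewrite the gradient sum as a sum over constraints
    have hswap : ∑ n, ρ n / q n * (q' n - q n)
        = ∑ S : Finset (Fin N), ζ S * ((∑ i ∈ S, q' i / p i) - ∑ i ∈ S, q i / p i) := by
      have e1 : ∀ n, ρ n / q n * (q' n - q n)
          = (∑ S : Finset (Fin N), if n ∈ S then ζ S else 0) * ((q' n - q n) / p n) := by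
        intro n
        rw [hstat n, hsumS n]
        have h2 := (hp n).1
        field_simp
      rw [Finset.sum_congr rfl (fun n _ => e1 n)]
      have e2 : ∀ n, (∑ S : Finset (Fin N), if n ∈ S then ζ S else 0) * ((q' n - q n) / p n)
          = ∑ S : Finset (Fin N), if n ∈ S then ζ S * ((q' n - q n) / p n) else 0 := by
        intro n
        rw [Finset.sum_mul]
        apply Finset.sum_congr rfl
        intro S _
        split <;> simp
      rw [Finset.sum_congr rfl (fun n _ => e2 n), Finset.sum_comm]
      apply Finset.sum_congr rfl
      intro S _
      rw [Finset.sum_ite_mem, Finset.univ_inter, mul_sub, Finset.mul_sum,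
        Finset.mul_sum, ← Finset.sum_sub_distrib]
      apply Finset.sum_congr rfl
      intro i _
      ring
    have hterm : ∀ S : Finset (Fin N),
        ζ S * ((∑ i ∈ S, q' i / p i) - ∑ i ∈ S, q i / p i) ≤ 0 := by
      intro S
      by_cases h : ∀ k, 1 ≤ k → k ≤ K → S ≠ H k
      · have : ζ S = 0 := by
          rw [hζval]; apply Finset.sum_eq_zero
          intro k hk
          rw [if_neg (h k (Finset.mem_Icc.mp hk).1 (Finset.mem_Icc.mp hk).2)]
        rw [this, zero_mul]
      · push_neg at h
        obtain ⟨k, h1, h2, h3⟩ := h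
        have hζnn : 0 ≤ ζ S := by
          rw [hζval]
          apply Finset.sum_nonneg
          intro j hj
          split
          · exact hwnn j (Finset.mem_Icc.mp hj).1 (Finset.mem_Icc.mp hj).2
          · exact le_rfl
        have heq : ∑ i ∈ S, q i / p i = τ - I S := by
          rw [h3]; exact hlayer k h1 h2
        have hle : ∑ i ∈ S, q' i / p i ≤ τ - I S := hfeas' S
        apply mul_nonpos_of_nonneg_of_nonpos hζnn
        linarith
    have hsum : ∑ n, (ρ n * Real.log (q' n) - ρ n * Real.log (q n)) ≤ 0 := by
      calc ∑ n, (ρ n * Real.log (q' n) - ρ n * Real.log (q n))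
          ≤ ∑ n, ρ n / q n * (q' n - q n) := Finset.sum_le_sum (fun n _ => key n)
        _ = ∑ S : Finset (Fin N), ζ S * ((∑ i ∈ S, q' i / p i) - ∑ i ∈ S, q i / p i) := hswap
        _ ≤ 0 := Finset.sum_nonpos (fun S _ => hterm S)
    rw [Finset.sum_sub_distrib] at hsum
    linarith
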